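/- arXiv:1501.02888 — 7 statements merged into one kernel-verified Lean document; each statement's English description precedes it below -/
import Mathlib

section
/- Let A be an m×n real matrix, L = ‖AᵀA‖₂, and D a diagonal matrix with diagonal entries in {−1, 0, 1}. Then every eigenvalue of R = (I − (1/L)AᵀA)D² is real and lies in the interval [0, 1]. -/
open Matrix
open scoped ComplexOrder

/-- The operator norm of a real matrix, induced by the Euclidean vector norm. -/
noncomputable def opNorm2 {m n : ℕ} (M : Matrix (Fin m) (Fin n) ℝ) : ℝ :=
  ‖LinearMap.toContinuousLinearMap (Matrix.toEuclideanLin M)‖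

lemma stmt3_psd_map {n : ℕ} {M : Matrix (Fin n) (Fin n) ℝ} (hM : M.PosSemidef) :
    (M.map (algebraMap ℝ ℂ)).PosSemidef := by
  obtain ⟨B, rfl⟩ : ∃ B : Matrix (Fin n) (Fin n) ℝ, M = Bᴴ * B := by
    open scoped MatrixOrder in exact CStarAlgebra.nonneg_iff_eq_star_mul_self.mp hM.nonneg
  rw [Matrix.map_mul]
  have : (Bᴴ).map (algebraMap ℝ ℂ) = (B.map (algebraMap ℝ ℂ))ᴴ := by
    apply Matrix.conjTranspose_map
    intro x
    simp [Complex.ext_iff]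
  rw [this]
  exact posSemidef_conjTranspose_mul_self _

lemma stmt3_key {n : ℕ} (N : Matrix (Fin n) (Fin n) ℝ) (x : Fin n → ℝ) :
    x ⬝ᵥ (N *ᵥ x) ≤ opNorm2 N * (x ⬝ᵥ x) := by
  set T := LinearMap.toContinuousLinearMap (Matrix.toEuclideanLin N)
  set y : EuclideanSpace ℝ (Fin n) := (WithLp.equiv 2 _).symm x
  have h1 : x ⬝ᵥ (N *ᵥ x) = inner ℝ y (T y) := by
    show _ = inner ℝ y (Matrix.toEuclideanLin N ((WithLp.equiv 2 _).symm x))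
    show x ⬝ᵥ (N *ᵥ x) = (N *ᵥ x) ⬝ᵥ star x
    rw [star_trivial, dotProduct_comm]
  have h2 : x ⬝ᵥ x = ‖y‖ ^ 2 := by
    rw [← real_inner_self_eq_norm_sq]
    show x ⬝ᵥ x = x ⬝ᵥ star x
    rw [star_trivial]
  rw [h1, h2]
  calc inner ℝ y (T y) ≤ ‖y‖ * ‖T y‖ := real_inner_le_norm y (T y)
    _ ≤ ‖y‖ * (‖T‖ * ‖y‖) := by gcongr; exact T.le_opNorm y
    _ = opNorm2 N * ‖y‖ ^ 2 := by rw [show opNorm2 N = ‖T‖ from rfl]; ring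

theorem stmt3 {m n : ℕ} (A : Matrix (Fin m) (Fin n) ℝ) (d : Fin n → ℝ)
    (hd : ∀ i, d i = -1 ∨ d i = 0 ∨ d i = 1)
    (R : Matrix (Fin n) (Fin n) ℝ)
    (hR : R = (1 - (opNorm2 (Aᵀ * A))⁻¹ • (Aᵀ * A)) * (Matrix.diagonal d) ^ 2)
    (μ : ℂ) (hμ : μ ∈ spectrum ℂ (R.map (algebraMap ℝ ℂ))) :
    μ.im = 0 ∧ 0 ≤ μ.re ∧ μ.re ≤ 1 := by
  classical
  set N : Matrix (Fin n) (Fin n) ℝ := Aᵀ * A with hN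
  set c : ℝ := (opNorm2 N)⁻¹ with hc
  set Sr : Matrix (Fin n) (Fin n) ℝ := 1 - c • N with hSr
  set Pr : Matrix (Fin n) (Fin n) ℝ := (Matrix.diagonal d) ^ 2 with hPr
  have hAconj : Aᴴ = Aᵀ := rfl
  have hNpsd : N.PosSemidef := by rw [hN, ← hAconj]; exact posSemidef_conjTranspose_mul_self A
  have hc0 : 0 ≤ c := inv_nonneg.mpr (norm_nonneg _)
  -- quadratic form bound
  have hkey : ∀ x : Fin n → ℝ, c * (x ⬝ᵥ (N *ᵥ x)) ≤ x ⬝ᵥ x := by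
    intro x
    rcases eq_or_lt_of_le (norm_nonneg (LinearMap.toContinuousLinearMap (Matrix.toEuclideanLin N)))
      with h0 | hpos
    · have : c = 0 := by rw [hc, show opNorm2 N = ‖_‖ from rfl, ← h0]; simp
      rw [this, zero_mul]
      simpa using dotProduct_star_self_nonneg x
    · have hL : (0:ℝ) < opNorm2 N := hpos
      have := stmt3_key N x
      calc c * (x ⬝ᵥ (N *ᵥ x)) ≤ c * (opNorm2 N * (x ⬝ᵥ x)) := by
            apply mul_le_mul_of_nonneg_left this hc0
        _ = x ⬝ᵥ x := by
            rw [hc, ← mul_assoc, inv_mul_cancel₀ hL.ne', one_mul]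
  have hSrherm : Sr.IsHermitian := by
    show Srᴴ = Sr
    rw [hSr, Matrix.conjTranspose_sub, Matrix.conjTranspose_one, Matrix.conjTranspose_smul,
      hNpsd.isHermitian]
    norm_num
  have hSrpsd : Sr.PosSemidef := by
    refine Matrix.PosSemidef.of_dotProduct_mulVec_nonneg hSrherm fun x => ?_
    have : star x ⬝ᵥ (Sr *ᵥ x) = x ⬝ᵥ x - c * (x ⬝ᵥ (N *ᵥ x)) := by
      rw [hSr, Matrix.sub_mulVec, dotProduct_sub, Matrix.one_mulVec,
        Matrix.smul_mulVec, dotProduct_smul, smul_eq_mul]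
      simp
    rw [this]
    exact sub_nonneg.mpr (hkey x)
  have h1Srpsd : (1 - Sr).PosSemidef := by
    have heq1 : (1:Matrix (Fin n) (Fin n) ℝ) - Sr = c • N := by rw [hSr, sub_sub_cancel]
    rw [heq1]
    refine Matrix.PosSemidef.of_dotProduct_mulVec_nonneg ?_ fun x => ?_
    · show (c • N)ᴴ = c • N
      rw [Matrix.conjTranspose_smul, hNpsd.isHermitian]
      norm_num
    · rw [Matrix.smul_mulVec, dotProduct_smul, smul_eq_mul]
      exact mul_nonneg hc0 (hNpsd.dotProduct_mulVec_nonneg x)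
  -- properties of Pr
  have hPrdiag : Pr = Matrix.diagonal (fun i => d i ^ 2) := by
    rw [hPr, pow_two, Matrix.diagonal_mul_diagonal]
    ext i j
    by_cases h : i = j <;> simp [Matrix.diagonal_apply, h, pow_two]
  have hPrpsd : Pr.PosSemidef := by
    rw [hPrdiag]
    exact Matrix.PosSemidef.diagonal (fun i => sq_nonneg (d i))
  have h1Prpsd : ((1:Matrix (Fin n) (Fin n) ℝ) - Pr).PosSemidef := by
    rw [hPrdiag, ← Matrix.diagonal_one, Matrix.diagonal_sub]
    refine Matrix.PosSemidef.diagonal fun i => ?_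
    rcases hd i with h | h | h <;> rw [h] <;> norm_num
  have hPrid : Pr * Pr = Pr := by
    rw [hPrdiag, Matrix.diagonal_mul_diagonal]
    ext i j
    by_cases h : i = j
    · rcases hd j with h' | h' | h' <;> simp [Matrix.diagonal_apply, h, h']
    · simp [Matrix.diagonal_apply, h]
  -- complexify
  set f := algebraMap ℝ ℂ
  set Sc := Sr.map f with hSc
  set P := Pr.map f with hP
  have hScpsd : Sc.PosSemidef := stmt3_psd_map hSrpsd
  have hPpsd : P.PosSemidef := stmt3_psd_map hPrpsd
  have hmap_one : ((1:Matrix (Fin n) (Fin n) ℝ)).map f = 1 := Matrix.map_one f f.map_zero f.map_one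
  have hmap_sub : ∀ X Y : Matrix (Fin n) (Fin n) ℝ, (X - Y).map f = X.map f - Y.map f :=
    fun X Y => Matrix.map_sub _ (fun a b => f.map_sub a b) _ _
  have h1Scpsd : ((1:Matrix (Fin n) (Fin n) ℂ) - Sc).PosSemidef := by
    have := stmt3_psd_map h1Srpsd
    rwa [hmap_sub, hmap_one] at this
  have h1Ppsd : ((1:Matrix (Fin n) (Fin n) ℂ) - P).PosSemidef := by
    have := stmt3_psd_map h1Prpsd
    rwa [hmap_sub, hmap_one] at this
  have hPid : P * P = P := by rw [hP, ← Matrix.map_mul, hPrid]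
  have hPherm : Pᴴ = P := hPpsd.isHermitian
  set M := R.map f with hM
  have hMSP : M = Sc * P := by rw [hM, hR, Matrix.map_mul]
  set H := P * Sc * P with hH
  have hHpsd : H.PosSemidef := by
    have := hScpsd.conjTranspose_mul_mul_same P
    rwa [hPherm] at this
  have h1Hpsd : ((1:Matrix (Fin n) (Fin n) ℂ) - H).PosSemidef := by
    have h2 := h1Scpsd.conjTranspose_mul_mul_same P
    rw [hPherm] at h2
    have heq : (1:Matrix (Fin n) (Fin n) ℂ) - H = (1 - P) + P * (1 - Sc) * P := by
      rw [hH]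
      have : P * (1 - Sc) * P = P * P - P * Sc * P := by noncomm_ring
      rw [this, hPid]
      noncomm_ring
    rw [heq]
    exact h1Ppsd.add h2
  -- eigenvector
  rw [← AlgEquiv.spectrum_eq (Matrix.toLinAlgEquiv' (R := ℂ) (n := Fin n)) M] at hμ
  obtain ⟨v, hv⟩ := (Module.End.hasEigenvalue_iff_mem_spectrum.mpr hμ).exists_hasEigenvector
  have hv0 : v ≠ 0 := hv.right
  have hmv : M *ᵥ v = μ • v := by
    have := Module.End.mem_eigenspace_iff.mp hv.left
    rw [Matrix.toLinAlgEquiv'_apply] at this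
    exact this
  set w := P *ᵥ v with hw
  by_cases hwz : w = 0
  · have : μ • v = 0 := by
      rw [← hmv, hMSP, ← Matrix.mulVec_mulVec, ← hw, hwz, Matrix.mulVec_zero]
    rcases smul_eq_zero.mp this with h | h
    · simp [h]
    · exact absurd h hv0
  · have hHw : H *ᵥ w = μ • w := by
      rw [hw, Matrix.mulVec_mulVec, hH, Matrix.mul_assoc (P * Sc) P P, hPid,
        show P * Sc * P = P * (Sc * P) from by rw [Matrix.mul_assoc],
        ← Matrix.mulVec_mulVec, ← hMSP, hmv, Matrix.mulVec_smul]
    set s := star w ⬝ᵥ w with hs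
    set t := star w ⬝ᵥ (H *ᵥ w) with ht
    have hts : t = μ * s := by rw [ht, hHw, dotProduct_smul, hs, smul_eq_mul]
    have ht0 : 0 ≤ t := hHpsd.dotProduct_mulVec_nonneg w
    have hts' : t ≤ s := by
      have h0 := h1Hpsd.dotProduct_mulVec_nonneg w
      rw [Matrix.sub_mulVec, dotProduct_sub, Matrix.one_mulVec] at h0
      have := sub_nonneg.mp (by exact h0)
      rwa [← hs, ← ht] at this
    have hs0 : 0 ≤ s := dotProduct_star_self_nonneg w
    have hsne : s ≠ 0 := fun h => hwz (dotProduct_star_self_eq_zero.mp h)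
    -- extract real parts
    have hsim : s.im = 0 := by
      simpa using ((Complex.le_def.mp hs0).2).symm
    have htim : t.im = 0 := by
      simpa using ((Complex.le_def.mp ht0).2).symm
    have htre : 0 ≤ t.re := (Complex.le_def.mp ht0).1
    have htsre : t.re ≤ s.re := (Complex.le_def.mp hts').1
    have hsre : 0 < s.re := by
      rcases lt_or_eq_of_le (Complex.le_def.mp hs0).1 with h | h
      · exact h
      · exact absurd (Complex.ext h.symm hsim) hsne
    have him : μ.im = 0 := by
      have := congrArg Complex.im hts
      rw [Complex.mul_im, hsim, htim] at this
      have h2 : μ.im * s.re = 0 := by linarith [this]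
      rcases mul_eq_zero.mp h2 with h | h
      · exact h
      · exact absurd h hsre.ne'
    have hre : μ.re * s.re = t.re := by
      have := congrArg Complex.re hts
      rw [Complex.mul_re, hsim, him] at this
      linarith [this]
    refine ⟨him, ?_, ?_⟩
    · nlinarith
    · nlinarith
end

section
/- Let 0 < τ ≤ 1 and 0 ≤ β ≤ 1 be real numbers, and let γ be a complex root of γ² − (1+τ)βγ + τβ = 0. Then |γ − 1/2| ≤ 1/2, i.e., γ lies in the closed disk in the complex plane of center 1/2 and radius 1/2. -/
/-- Any complex root `γ` of `γ² − (1+τ)βγ + τβ = 0` with `0 < τ ≤ 1`, `0 ≤ β ≤ 1`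
lies in the closed disk of center `1/2` and radius `1/2`. -/
theorem stmt8 (τ β : ℝ) (hτ0 : 0 < τ) (hτ1 : τ ≤ 1) (hβ0 : 0 ≤ β) (hβ1 : β ≤ 1)
    (γ : ℂ) (hγ : γ ^ 2 - (1 + (τ : ℂ)) * (β : ℂ) * γ + (τ : ℂ) * (β : ℂ) = 0) :
    ‖γ - 1 / 2‖ ≤ 1 / 2 := by
  set a := γ.re with ha
  set b := γ.im with hb
  have h1 := congrArg Complex.re hγ
  have h2 := congrArg Complex.im hγ
  simp [pow_two, Complex.mul_re, Complex.mul_im, Complex.add_re, Complex.add_im,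
    Complex.sub_re, Complex.sub_im] at h1 h2
  -- h1 : real part equation, h2 : imaginary part equation
  have key : a ^ 2 - a + b ^ 2 ≤ 0 := by
    have h2' : b * (2 * a - (1 + τ) * β) = 0 := by ring_nf; ring_nf at h2; linarith
    rcases mul_eq_zero.1 h2' with hb0 | hab
    · -- b = 0 : real root, lies in [τβ, β] ⊆ [0,1]
      have h1' : a * a - (1 + τ) * β * a + τ * β = 0 := by
        rw [ha, hb] at *; nlinarith [h1, hb0]
      have hprod : (a - β) * (a - τ * β) ≤ 0 := by nlinarith [mul_nonneg (mul_nonneg hτ0.le hβ0) (sub_nonneg.2 hβ1)]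
      have hage : τ * β ≤ a ∧ a ≤ β := by
        constructor <;> nlinarith [hprod, mul_nonneg hβ0 (sub_nonneg.2 hτ1), sq_nonneg (a - β), sq_nonneg (a - τ * β)]
      rw [hb0]
      nlinarith [hage.1, hage.2, mul_nonneg hτ0.le hβ0]
    · -- 2a = (1+τ)β
      have haeq : 2 * a = (1 + τ) * β := by linarith
      nlinarith [h1, mul_nonneg hβ0 (sub_nonneg.2 hτ1)]
  have : Complex.normSq (γ - 1 / 2) ≤ (1 / 2) ^ 2 := by
    have : Complex.normSq (γ - 1 / 2) = (a - 1 / 2) ^ 2 + b ^ 2 := by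
      simp [Complex.normSq_apply, Complex.sub_re, Complex.sub_im, ← ha, ← hb]
      ring
    rw [this]
    nlinarith [key]
  calc ‖γ - 1 / 2‖ = Real.sqrt (Complex.normSq (γ - 1 / 2)) := by
        rw [Complex.norm_def]
    _ ≤ Real.sqrt ((1 / 2) ^ 2) := Real.sqrt_le_sqrt this
    _ = 1 / 2 := by rw [Real.sqrt_sq (by norm_num)]
end

section
/- Let 0 < τ ≤ 1 and 0 ≤ β ≤ 1, and let γ be a complex root of γ² − (1+τ)βγ + τβ = 0 with |γ| = 1. Then γ = 1. -/
/-- If a complex root `γ` of `γ² − (1+τ)βγ + τβ = 0` (with `0 < τ ≤ 1`, `0 ≤ β ≤ 1`)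
has `|γ| = 1`, then `γ = 1`. -/
theorem stmt9 (τ β : ℝ) (hτ0 : 0 < τ) (hτ1 : τ ≤ 1) (hβ0 : 0 ≤ β) (hβ1 : β ≤ 1)
    (γ : ℂ) (hγ : γ ^ 2 - (1 + (τ : ℂ)) * (β : ℂ) * γ + (τ : ℂ) * (β : ℂ) = 0)
    (habs : ‖γ‖ = 1) :
    γ = 1 := by
  set x := γ.re with hx
  set y := γ.im with hy
  have hn : x ^ 2 + y ^ 2 = 1 := by
    have h := Complex.sq_norm γ
    rw [habs, Complex.normSq_apply] at h
    nlinarith [h]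
  rw [Complex.ext_iff] at hγ
  simp only [pow_two, Complex.add_re, Complex.add_im, Complex.sub_re, Complex.sub_im,
    Complex.mul_re, Complex.mul_im, Complex.ofReal_re, Complex.ofReal_im,
    Complex.one_re, Complex.one_im, Complex.zero_re, Complex.zero_im] at hγ
  obtain ⟨hre, him⟩ := hγ
  rw [Complex.ext_iff]
  simp only [Complex.one_re, Complex.one_im]
  -- him : 2xy - (1+τ)βy = 0 (in some form)
  have him' : y * (2 * x - (1 + τ) * β) = 0 := by ring_nf; ring_nf at him; linarith
  rcases mul_eq_zero.mp him' with hy0 | hx0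
  · -- y = 0
    have hx1 : x = 1 ∨ x = -1 := by
      have : x ^ 2 = 1 := by nlinarith
      have h2 : (x - 1) * (x + 1) = 0 := by nlinarith
      rcases mul_eq_zero.mp h2 with h | h
      · left; linarith
      · right; linarith
    rcases hx1 with h1 | h1
    · exact ⟨h1, hy0⟩
    · exfalso
      -- hre with x = -1, y = 0: 1 + (1+τ)β + τβ = 0
      nlinarith [mul_nonneg hτ0.le hβ0, mul_nonneg (mul_nonneg hτ0.le hβ0) hβ0]
  · -- 2x = (1+τ)β
    have hxv : 2 * x = (1 + τ) * β := by linarith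
    -- real part: x² - y² - (1+τ)βx + τβ = 0 → with (1+τ)β = 2x: -x²-y²+τβ=0 → τβ = 1
    have hτβ : τ * β = 1 := by nlinarith
    have hτ : τ = 1 := by nlinarith
    have hβ : β = 1 := by nlinarith
    -- contradiction comes from nothing... recheck: x=1,y=0 gives γ=1, not a contradiction!
    have : x = 1 := by nlinarith
    have hy2 : y = 0 := by nlinarith
    exact ⟨this, hy2⟩
end

section
/- Let 0 < τ < 1 and 0 < β < 1 be real. If β > τ, then both roots of γ² − (1+τ)βγ + τβ = 0 are real (the discriminant (1+τ)²β² − 4τβ may be negative or nonnegative) or complex, and in either case every root γ satisfies |γ| < β. If β < τ, then the roots are a complex conjugate pair with |γ| = √(τβ) > β. -/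
open ComplexConjugate

/-- For `0 < τ < 1`, `0 < β < 1`, and `γ` a complex root of `γ² − (1+τ)βγ + τβ = 0`:
if `β > τ` then `|γ| < β`; if `β < τ` then the roots form a complex conjugate pair
with `|γ| = √(τβ) > β`. -/
theorem stmt11 (τ β : ℝ) (hτ0 : 0 < τ) (hτ1 : τ < 1) (hβ0 : 0 < β) (hβ1 : β < 1)
    (γ : ℂ) (hγ : γ ^ 2 - (1 + (τ : ℂ)) * (β : ℂ) * γ + (τ : ℂ) * (β : ℂ) = 0) :
    (τ < β → ‖γ‖ < β) ∧
    (β < τ → γ.im ≠ 0 ∧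
      (conj γ) ^ 2 - (1 + (τ : ℂ)) * (β : ℂ) * conj γ + (τ : ℂ) * (β : ℂ) = 0 ∧
      ‖γ‖ = Real.sqrt (τ * β) ∧ β < Real.sqrt (τ * β)) := by
  set x := γ.re with hx
  set y := γ.im with hy
  have h := hγ
  rw [Complex.ext_iff] at h
  simp [pow_two, Complex.mul_re, Complex.mul_im] at h
  obtain ⟨hre, him⟩ := h
  have hre' : x*x - y*y - (1+τ)*β*x + τ*β = 0 := by linarith
  have him' : y*(2*x - (1+τ)*β) = 0 := by ring_nf; ring_nf at him; linarith
  have habs : ‖γ‖ = Real.sqrt (x^2 + y^2) := by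
    rw [Complex.norm_def, Complex.normSq_apply]; ring_nf; rfl
  -- key: if y ≠ 0 then x² + y² = τβ
  have key : y ≠ 0 → x^2 + y^2 = τ*β := by
    intro hy0
    have h2x : 2*x = (1+τ)*β := by
      rcases mul_eq_zero.mp him' with h | h
      · exact absurd h hy0
      · linarith
    nlinarith [hre', h2x]
  constructor
  · intro hτβ
    by_cases hy0 : y = 0
    · rw [hy0] at hre'
      have hx0 : 0 < x := by nlinarith [mul_pos hτ0 hβ0]
      have hxβ : x < β := by nlinarith [mul_pos (mul_pos hτ0 hβ0) (sub_pos.mpr hβ1), sq_nonneg (x - β), mul_lt_of_lt_one_left hβ0 hτ1]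
      rw [habs, hy0, show x^2 + 0^2 = x^2 by ring, Real.sqrt_sq hx0.le]
      exact hxβ
    · rw [habs, key hy0]
      calc Real.sqrt (τ*β) < Real.sqrt (β^2) := by
            apply Real.sqrt_lt_sqrt (by positivity); nlinarith
        _ = β := Real.sqrt_sq hβ0.le
  · intro hβτ
    have hy0 : y ≠ 0 := by
      intro h0
      rw [h0] at hre'
      nlinarith [sq_nonneg (2*x - (1+τ)*β), mul_pos hβ0 hτ0,
        mul_pos (mul_pos hβ0 hβ0) (mul_pos (sub_pos.mpr hτ1) hτ0)]
    refine ⟨hy0, ?_, ?_, ?_⟩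
    · have := congrArg conj hγ
      simpa [map_sub, map_add, map_mul, map_pow] using this
    · rw [habs, key hy0]
    · calc β = Real.sqrt (β^2) := (Real.sqrt_sq hβ0.le).symm
        _ < Real.sqrt (τ*β) := by apply Real.sqrt_lt_sqrt (by positivity); nlinarith
end

section
/- Let 0 < τ < 1 and 4τ/(1+τ)² < β < 1. Then both roots of γ² − (1+τ)βγ + τβ = 0 are real and satisfy 0 < γ < β < 1; in particular the larger root γ₁ = ((1+τ)β + √(β((1+τ)²β−4τ)))/2 is strictly less than β. -/
/-- For `0 < τ < 1` and `4τ/(1+τ)² < β < 1`, both roots of `γ² − (1+τ)βγ + τβ = 0`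
are real and lie in `(0, β)`; in particular the larger root
`γ₁ = ((1+τ)β + √(β((1+τ)²β−4τ)))/2` is a root and is strictly less than `β`. -/
theorem stmt13 (τ β : ℝ) (hτ0 : 0 < τ) (hτ1 : τ < 1)
    (hβlo : 4 * τ / (1 + τ) ^ 2 < β) (hβ1 : β < 1) :
    (∀ γ : ℂ, γ ^ 2 - (1 + (τ : ℂ)) * (β : ℂ) * γ + (τ : ℂ) * (β : ℂ) = 0 →
      γ.im = 0 ∧ 0 < γ.re ∧ γ.re < β) ∧
    (let γ₁ : ℝ := ((1 + τ) * β + Real.sqrt (β * ((1 + τ) ^ 2 * β - 4 * τ))) / 2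
     γ₁ ^ 2 - (1 + τ) * β * γ₁ + τ * β = 0 ∧ γ₁ < β) := by
  have hτp : (0:ℝ) < (1 + τ) ^ 2 := by positivity
  have hβ0 : 0 < β := lt_trans (by positivity) hβlo
  have hkey : 4 * τ < (1 + τ) ^ 2 * β := by
    rw [div_lt_iff₀ hτp] at hβlo; linarith
  have hD : 0 < β * ((1 + τ) ^ 2 * β - 4 * τ) := by nlinarith
  set s := Real.sqrt (β * ((1 + τ) ^ 2 * β - 4 * τ)) with hs_def
  have hs0 : 0 ≤ s := Real.sqrt_nonneg _
  have hs2 : s ^ 2 = β * ((1 + τ) ^ 2 * β - 4 * τ) := Real.sq_sqrt hD.le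
  have hslt : s < (1 - τ) * β := by
    rw [hs_def, show (1 - τ) * β = Real.sqrt (((1 - τ) * β) ^ 2) by
      rw [Real.sqrt_sq (by nlinarith)]]
    apply Real.sqrt_lt_sqrt hD.le
    nlinarith [mul_pos (mul_pos hτ0 hβ0) (sub_pos.2 hβ1)]
  have hslt2 : s < (1 + τ) * β := by nlinarith
  set γ₁ : ℝ := ((1 + τ) * β + s) / 2 with hγ₁
  set γ₂ : ℝ := ((1 + τ) * β - s) / 2 with hγ₂
  have hsum : γ₁ + γ₂ = (1 + τ) * β := by rw [hγ₁, hγ₂]; ring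
  have hprod : γ₁ * γ₂ = τ * β := by
    rw [hγ₁, hγ₂]; nlinarith [hs2]
  have h1root : γ₁ ^ 2 - (1 + τ) * β * γ₁ + τ * β = 0 := by nlinarith [hs2]
  have hγ₂pos : 0 < γ₂ := by rw [hγ₂]; nlinarith
  have hγ₁lt : γ₁ < β := by rw [hγ₁]; nlinarith
  have hγ₁pos : 0 < γ₁ := by rw [hγ₁]; nlinarith
  have hγ₂lt : γ₂ < β := by
    calc γ₂ ≤ γ₁ := by rw [hγ₁, hγ₂]; nlinarith
    _ < β := hγ₁lt
  refine ⟨fun γ hγ => ?_, h1root, hγ₁lt⟩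
  have hfac : (γ - (γ₁:ℂ)) * (γ - (γ₂:ℂ)) = 0 := by
    have e1 : ((γ₁:ℝ) + γ₂ : ℝ) = (1 + τ) * β := hsum
    have e2 : ((γ₁:ℝ) * γ₂ : ℝ) = τ * β := hprod
    have : (γ - (γ₁:ℂ)) * (γ - (γ₂:ℂ))
        = γ ^ 2 - (((γ₁ + γ₂ : ℝ)):ℂ) * γ + (((γ₁ * γ₂ : ℝ)):ℂ) := by
      push_cast; ring
    rw [this, e1, e2]; push_cast; exact hγ
  rcases mul_eq_zero.1 hfac with h | h
  · have : γ = (γ₁:ℂ) := by linear_combination h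
    subst this
    exact ⟨rfl, hγ₁pos, hγ₁lt⟩
  · have : γ = (γ₂:ℂ) := by linear_combination h
    subst this
    exact ⟨rfl, hγ₂pos, hγ₂lt⟩
end

section
/- Let A be an m×n real matrix, b ∈ ℝᵐ, λ > 0, L = ‖AᵀA‖₂. A vector x ∈ ℝⁿ minimizes F(x) = ½‖Ax − b‖₂² + λ‖x‖₁ if and only if x = Shr_{λ/L}((I − (1/L)AᵀA)x + (1/L)Aᵀb), where Shr_t is the componentwise soft-thresholding operator Shr_t(w)_i = sign(w_i)·max(|w_i| − t, 0). -/
open Matrix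

/-- Componentwise soft-thresholding (shrinkage) with threshold `t`. -/
noncomputable def shr (t x : ℝ) : ℝ := Real.sign x * max (|x| - t) 0

lemma shr_char (t w u : ℝ) (ht : 0 < t) :
    u = shr t w ↔ (|w - u| ≤ t ∧ (w - u) * u = t * |u|) := by
  unfold shr
  constructor
  · rintro rfl
    rcases le_or_gt |w| t with h | h
    · rw [max_eq_right (by linarith)]
      simp only [mul_zero, sub_zero, abs_zero]
      exact ⟨h, by simp⟩
    · rw [max_eq_left (by linarith)]
      rcases lt_trichotomy w 0 with hw | rfl | hw
      · rw [abs_of_neg hw] at h ⊢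
        rw [Real.sign_of_neg hw]
        constructor
        · rw [show w - -1 * (-w - t) = -t by ring, abs_neg, abs_of_pos ht]
        · rw [abs_of_neg (by nlinarith : -1 * (-w - t) < 0)]; ring
      · simp at h; linarith
      · rw [abs_of_pos hw] at h ⊢
        rw [Real.sign_of_pos hw]
        constructor
        · rw [show w - 1 * (w - t) = t by ring, abs_of_pos ht]
        · rw [abs_of_pos (by nlinarith : (0:ℝ) < 1 * (w - t))]; ring
  · rintro ⟨h1, h2⟩
    rcases lt_trichotomy u 0 with hu | rfl | hu
    · rw [abs_of_neg hu] at h2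
      have hwu : w - u = -t := by
        apply mul_right_cancel₀ (ne_of_lt hu)
        rw [h2]; ring
      have hw : w < 0 := by linarith
      rw [Real.sign_of_neg hw, abs_of_neg hw, max_eq_left (by linarith)]
      linarith
    · simp only [abs_zero, mul_zero] at h1 h2 ⊢
      rw [sub_zero] at h1
      rw [max_eq_right (by linarith), mul_zero]
    · rw [abs_of_pos hu] at h2
      have hwu : w - u = t := mul_right_cancel₀ (ne_of_gt hu) h2
      have hw : 0 < w := by linarith
      rw [Real.sign_of_pos hw, abs_of_pos hw, max_eq_left (by linarith)]
      linarith

lemma aux_le (a c δ : ℝ) (hδ : 0 < δ) (h : ∀ ε : ℝ, 0 < ε → ε < δ → a ≤ ε * c) : a ≤ 0 := by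
  by_contra h'
  push_neg at h'
  rcases le_or_gt c 0 with hc | hc
  · have := h (δ/2) (by linarith) (by linarith)
    nlinarith
  · have hε : 0 < min (δ/2) (a/(2*c)) := lt_min (by linarith) (by positivity)
    have h2 := h _ hε (lt_of_le_of_lt (min_le_left _ _) (by linarith))
    have h3 : min (δ/2) (a/(2*c)) * c ≤ (a/(2*c)) * c :=
      mul_le_mul_of_nonneg_right (min_le_right _ _) hc.le
    have h4 : (a/(2*c)) * c = a/2 := by field_simp
    nlinarith

/-- `x` minimizes the LASSO objective `½‖Ax−b‖² + λ‖x‖₁` iff it is a fixed point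
of the ISTA iteration `x = Shr_{λ/L}((I − (1/L)AᵀA)x + (1/L)Aᵀb)` with `L = ‖AᵀA‖₂`. -/
theorem stmt17 {m n : ℕ} (A : Matrix (Fin m) (Fin n) ℝ) (b : Fin m → ℝ)
    (lam : ℝ) (hlam : 0 < lam)
    (L : ℝ) (hL : L = opNorm2 (Aᵀ * A)) (hLpos : 0 < L)
    (x : Fin n → ℝ) :
    (∀ y : Fin n → ℝ,
        (1 / 2) * ∑ i, (A.mulVec x - b) i ^ 2 + lam * ∑ j, |x j| ≤
        (1 / 2) * ∑ i, (A.mulVec y - b) i ^ 2 + lam * ∑ j, |y j|) ↔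
      ∀ i, x i = shr (lam / L)
        (((1 - L⁻¹ • (Aᵀ * A)).mulVec x + L⁻¹ • Aᵀ.mulVec b) i) := by
  set r : Fin m → ℝ := A.mulVec x - b with hr
  set g : Fin n → ℝ := Aᵀ.mulVec r with hg
  have hLinv : (0:ℝ) < L⁻¹ := inv_pos.mpr hLpos
  have hginv : ∀ i, ((1 - L⁻¹ • (Aᵀ * A)).mulVec x + L⁻¹ • Aᵀ.mulVec b) i
      = x i - L⁻¹ * g i := by
    intro i
    simp [hg, hr, Matrix.sub_mulVec, Matrix.one_mulVec, Matrix.smul_mulVec,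
      Matrix.mulVec_sub, Matrix.mulVec_mulVec, Pi.smul_apply, smul_eq_mul]
    ring
  have ht : 0 < lam / L := div_pos hlam hLpos
  -- reformulate the fixed-point condition as a subgradient condition
  have hfix_iff : (∀ i, x i = shr (lam / L)
        (((1 - L⁻¹ • (Aᵀ * A)).mulVec x + L⁻¹ • Aᵀ.mulVec b) i))
      ↔ ∀ i, |g i| ≤ lam ∧ g i * x i = -(lam * |x i|) := by
    apply forall_congr'
    intro i
    rw [hginv i, shr_char _ _ _ ht,
      show x i - L⁻¹ * g i - x i = -(L⁻¹ * g i) by ring]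
    constructor
    · rintro ⟨h1, h2⟩
      rw [abs_neg, abs_mul, abs_of_pos hLinv] at h1
      constructor
      · calc |g i| = L * (L⁻¹ * |g i|) := by field_simp
          _ ≤ L * (lam / L) := mul_le_mul_of_nonneg_left h1 hLpos.le
          _ = lam := by field_simp
      · have h3 : L * (-(L⁻¹ * g i) * x i) = L * (lam / L * |x i|) := by rw [h2]
        have hLL : L * L⁻¹ = 1 := mul_inv_cancel₀ (ne_of_gt hLpos)
        have h4 : L * (-(L⁻¹ * g i) * x i) = -(g i * x i) := by
          rw [show L * (-(L⁻¹ * g i) * x i) = -(L * L⁻¹ * (g i * x i)) from by ring, hLL]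
          ring
        have h5 : L * (lam / L * |x i|) = lam * |x i| := by
          field_simp
        rw [h4, h5] at h3
        linarith
    · rintro ⟨h1, h2⟩
      constructor
      · rw [abs_neg, abs_mul, abs_of_pos hLinv, div_eq_mul_inv, mul_comm lam]
        exact mul_le_mul_of_nonneg_left h1 hLinv.le
      · have h4 : -(L⁻¹ * g i) * x i = L⁻¹ * (-(g i * x i)) := by ring
        rw [h4, h2, neg_neg, div_eq_mul_inv]
        ring
  rw [hfix_iff]
  constructor
  · -- minimizer → subgradient condition
    intro hmin i
    have key : ∀ s : ℝ, 0 ≤ s * g i + s^2 * (∑ k, (A k i)^2) / 2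
        + lam * (|x i + s| - |x i|) := by
      intro s
      have h := hmin (x + (Pi.single i s : Fin n → ℝ))
      have hA : ∀ k, (A.mulVec (x + (Pi.single i s : Fin n → ℝ)) - b) k = r k + s * A k i := by
        intro k
        simp [Matrix.mulVec_add, Matrix.mulVec_single, hr]
        ring
      have hsq : ∑ k, (A.mulVec (x + (Pi.single i s : Fin n → ℝ)) - b) k ^ 2
          = ∑ k, r k ^ 2 + 2 * s * (∑ k, A k i * r k) + s^2 * ∑ k, (A k i)^2 := by
        simp only [hA]
        rw [Finset.mul_sum, Finset.mul_sum, ← Finset.sum_add_distrib, ← Finset.sum_add_distrib]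
        exact Finset.sum_congr rfl fun k _ => by ring
      have hgi : g i = ∑ k, A k i * r k := by
        simp [hg, Matrix.mulVec, dotProduct, Matrix.transpose]
      have habs : ∑ j, |(x + (Pi.single i s : Fin n → ℝ)) j| = ∑ j, |x j| + (|x i + s| - |x i|) := by
        have hptw : ∀ j, |(x + (Pi.single i s : Fin n → ℝ)) j|
            = |x j| + (if j = i then |x i + s| - |x i| else 0) := by
          intro j
          by_cases hj : j = i
          · subst hj; simp [Pi.single_eq_same]
          · simp [hj, Pi.single_eq_of_ne hj]
        simp only [hptw, Finset.sum_add_distrib, Finset.sum_ite_eq' Finset.univ i,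
          Finset.mem_univ, if_true]
      rw [hsq, habs] at h
      rw [hgi]
      nlinarith [h]
    set c : ℝ := ∑ k, (A k i)^2 with hc
    have hub : g i ≤ lam := by
      have : g i - lam ≤ 0 := by
        apply aux_le _ (c/2) 1 one_pos
        intro ε hε _
        have h := key (-ε)
        have h1 : |x i + -ε| - |x i| ≤ |(x i + -ε) - x i| := abs_sub_abs_le_abs_sub _ _
        have h2 : |(x i + -ε) - x i| = ε := by
          rw [show (x i + -ε) - x i = -ε by ring, abs_neg, abs_of_pos hε]
        nlinarith
      linarith
    have hlb : -lam ≤ g i := by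
      have : -g i - lam ≤ 0 := by
        apply aux_le _ (c/2) 1 one_pos
        intro ε hε _
        have h := key ε
        have h1 : |x i + ε| - |x i| ≤ |(x i + ε) - x i| := abs_sub_abs_le_abs_sub _ _
        have h2 : |(x i + ε) - x i| = ε := by
          rw [show (x i + ε) - x i = ε by ring, abs_of_pos hε]
        nlinarith
      linarith
    refine ⟨abs_le.mpr ⟨hlb, hub⟩, ?_⟩
    rcases lt_trichotomy (x i) 0 with hx | hx | hx
    · have hgl : lam - g i ≤ 0 := by
        apply aux_le _ (c/2) (-(x i)) (by linarith)
        intro ε hε hεx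
        have h := key ε
        have h1 : |x i + ε| = -(x i + ε) := abs_of_neg (by linarith)
        have h2 : |x i| = -(x i) := abs_of_neg hx
        nlinarith
      have : g i = lam := le_antisymm hub (by linarith)
      rw [this, abs_of_neg hx]; ring
    · simp [hx]
    · have hgl : g i + lam ≤ 0 := by
        apply aux_le _ (c/2) (x i) hx
        intro ε hε hεx
        have h := key (-ε)
        have h1 : |x i + -ε| = x i + -ε := abs_of_pos (by linarith)
        have h2 : |x i| = x i := abs_of_pos hx
        nlinarith
      have : g i = -lam := le_antisymm (by linarith) hlb
      rw [this, abs_of_pos hx]; ring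
  · -- subgradient condition → minimizer
    intro hsub y
    have hA : ∀ k, (A.mulVec y - b) k = r k + (A.mulVec (y - x)) k := by
      intro k
      simp [Matrix.mulVec_sub, hr]
    have hsq : ∑ k, (A.mulVec y - b) k ^ 2
        = ∑ k, r k ^ 2 + 2 * (∑ k, r k * (A.mulVec (y - x)) k)
          + ∑ k, (A.mulVec (y - x)) k ^ 2 := by
      simp only [hA]
      rw [Finset.mul_sum, ← Finset.sum_add_distrib, ← Finset.sum_add_distrib]
      exact Finset.sum_congr rfl fun k _ => by ring
    have hswap : ∑ k, r k * (A.mulVec (y - x)) k = ∑ i, g i * (y i - x i) := by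
      have hd : r ⬝ᵥ A.mulVec (y - x) = Aᵀ.mulVec r ⬝ᵥ (y - x) := by
        rw [Matrix.dotProduct_mulVec, Matrix.mulVec_transpose]
      simpa [dotProduct, hg, Pi.sub_apply] using hd
    have hterm : ∀ i, 0 ≤ g i * (y i - x i) + lam * |y i| - lam * |x i| := by
      intro i
      obtain ⟨h1, h2⟩ := hsub i
      have h4 : |g i * y i| ≤ lam * |y i| := by
        rw [abs_mul]; exact mul_le_mul_of_nonneg_right h1 (abs_nonneg _)
      have h5 : -(lam * |y i|) ≤ g i * y i := by
        have := neg_abs_le (g i * y i); linarith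
      have h6 : g i * (y i - x i) = g i * y i - g i * x i := by ring
      linarith
    have hsum : 0 ≤ ∑ i, (g i * (y i - x i) + lam * |y i| - lam * |x i|) :=
      Finset.sum_nonneg fun i _ => hterm i
    have hsplit : ∑ i, (g i * (y i - x i) + lam * |y i| - lam * |x i|)
        = ∑ i, g i * (y i - x i) + lam * ∑ i, |y i| - lam * ∑ i, |x i| := by
      rw [Finset.sum_sub_distrib, Finset.sum_add_distrib, ← Finset.mul_sum, ← Finset.mul_sum]
    have hq : 0 ≤ ∑ k, (A.mulVec (y - x)) k ^ 2 :=
      Finset.sum_nonneg fun k _ => sq_nonneg _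
    rw [hsq]
    rw [hsplit] at hsum
    rw [hswap]
    linarith [hsum, hq]
end

section
/- Let R be an n×n real matrix with eigenvector v satisfying Rv = v, let 0 < τ < 1, h ∈ ℝⁿ, and suppose w ∈ ℝⁿ satisfies (R − I)w + h = v. Define N_aug acting on (w₁, w₂, 1) by N_aug(w₁, w₂, 1) = ((1+τ)Rw₁ − τRw₂ + h, w₁, 1). Then setting c = 1/(1−τ), the vectors q = (w, w − c v, 1) and r = (c v, c v, 0) satisfy N_aug q = q + r and N_aug r = r; i.e., the FISTA constant step is c v = v/(1−τ), a factor 1/(1−τ) larger than the ISTA constant step v. -/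
open Matrix

/-- In a constant-step regime [B], if `Rv = v` and `(R − I)w + h = v`, then for the
FISTA augmented operator `N_aug(w₁, w₂, s) = ((1+τ)Rw₁ − τRw₂ + s·h, w₁, s)` the
vectors `q = (w, w − c·v, 1)` and `r = (c·v, c·v, 0)` with `c = 1/(1−τ)` form a
Jordan chain: `N_aug q = q + r` and `N_aug r = r`. Thus the FISTA constant step is
`v/(1−τ)`, a factor `1/(1−τ)` larger than the ISTA constant step `v`. -/
theorem stmt19 {n : ℕ} (R : Matrix (Fin n) (Fin n) ℝ) (v : Fin n → ℝ)
    (hv0 : v ≠ 0) (hv : R.mulVec v = v)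
    (τ : ℝ) (hτ0 : 0 < τ) (hτ1 : τ < 1)
    (h w : Fin n → ℝ) (hw : R.mulVec w - w + h = v)
    (Naug : (Fin n → ℝ) × (Fin n → ℝ) × ℝ → (Fin n → ℝ) × (Fin n → ℝ) × ℝ)
    (hN : Naug = fun z =>
      ((1 + τ) • R.mulVec z.1 - τ • R.mulVec z.2.1 + z.2.2 • h, z.1, z.2.2))
    (c : ℝ) (hc : c = 1 / (1 - τ)) :
    Naug (w, w - c • v, 1) = (w, w - c • v, 1) + (c • v, c • v, 0) ∧
      Naug (c • v, c • v, 0) = (c • v, c • v, 0) := by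
  have h1 : (1:ℝ) - τ ≠ 0 := by linarith
  have hcv : c * τ + 1 = c := by rw [hc]; field_simp; ring
  have hRw : R.mulVec w = v + w - h := by linear_combination hw
  subst hN
  constructor
  · dsimp only
    rw [Prod.mk_add_mk, Prod.mk_add_mk, Prod.mk.injEq, Prod.mk.injEq]
    refine ⟨?_, ?_, by norm_num⟩
    · rw [Matrix.mulVec_sub, Matrix.mulVec_smul, hv, hRw]
      ext i
      simp only [Pi.add_apply, Pi.sub_apply, Pi.smul_apply, smul_eq_mul, Pi.one_apply]
      linear_combination (v i) * hcv
    · abel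
  · dsimp only
    rw [Prod.mk.injEq, Prod.mk.injEq]
    refine ⟨?_, rfl, rfl⟩
    rw [Matrix.mulVec_smul, hv]
    ext i
    simp only [Pi.add_apply, Pi.sub_apply, Pi.smul_apply, smul_eq_mul, Pi.zero_apply]
    ring
end
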